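/- Let t_p(n) denote the number of edges of the Turán graph (complete p-partite graph on n vertices with parts as equal as possible). Then for all integers n > k ≥ 1 and p ≥ 1, t_p(n) − t_p(n−k) ≥ (1 − 1/p) · k · (n−k). -/

import Mathlib

open scoped Classical in
/-- `t p n`: the number of edges of the Turán graph (complete `p`-partite
graph on `n` vertices with parts as equal as possible). -/
noncomputable def turanEdges (p n : ℕ) : ℕ := (SimpleGraph.turanGraph n p).edgeFinset.card


open Finset

open scoped Classical in
lemma lemA (p n : ℕ) :
    2 * turanEdges p n + ∑ i ∈ range n, #((range n).filter fun j => j % p = i % p)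
      = n * n := by
  classical
  have h2 : ∑ v : Fin n, (SimpleGraph.turanGraph n p).degree v = 2 * turanEdges p n := by
    rw [turanEdges]
    exact SimpleGraph.sum_degrees_eq_twice_card_edges _
  have hdeg : ∀ v : Fin n, (SimpleGraph.turanGraph n p).degree v
      + #(univ.filter fun w : Fin n => (w : ℕ) % p = (v : ℕ) % p) = n := by
    intro v
    have h1 : (SimpleGraph.turanGraph n p).degree v
        = #(univ.filter fun w : Fin n => ¬ ((w : ℕ) % p = (v : ℕ) % p)) := by
      rw [← SimpleGraph.card_neighborFinset_eq_degree, SimpleGraph.neighborFinset_eq_filter]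
      congr 1
      apply filter_congr
      intro w _
      simp [SimpleGraph.turanGraph, eq_comm, ne_comm]
    rw [h1, add_comm, Finset.card_filter_add_card_filter_not]
    simp
  have hconv : ∀ v : Fin n, #(univ.filter fun w : Fin n => (w : ℕ) % p = (v : ℕ) % p)
      = #((range n).filter fun j => j % p = (v : ℕ) % p) := by
    intro v
    rw [Finset.card_filter, Finset.card_filter, Fin.sum_univ_eq_sum_range
      (fun j => if j % p = (v : ℕ) % p then 1 else 0)]
  have hsum : ∑ v : Fin n, ((SimpleGraph.turanGraph n p).degree v
      + #((range n).filter fun j => j % p = (v : ℕ) % p)) = n * n := by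
    have : ∀ v : Fin n, (SimpleGraph.turanGraph n p).degree v
        + #((range n).filter fun j => j % p = (v : ℕ) % p) = n := fun v => by
      rw [← hconv v]; exact hdeg v
    simp [this]
  rw [Finset.sum_add_distrib, h2] at hsum
  rw [← hsum]
  congr 1
  exact (Fin.sum_univ_eq_sum_range (fun i => #((range n).filter fun j => j % p = i % p)) n).symm

lemma lemN (p n : ℕ) (hp : 0 < p) :
    #((range n).filter fun j => j % p = n % p) = n / p := by
  have := Nat.count_modEq_card n hp n
  rw [Nat.count_eq_card_filter_range] at this
  rw [show n / p = n / p + (if n % p < n % p then 1 else 0) by simp, ← this]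
  rfl

lemma lemS (p n : ℕ) (hp : 0 < p) :
    ∑ i ∈ range (n+1), #((range (n+1)).filter fun j => j % p = i % p)
      = (∑ i ∈ range n, #((range n).filter fun j => j % p = i % p)) + 2 * (n / p) + 1 := by
  classical
  rw [Finset.sum_range_succ]
  have hfil : ∀ i, #((range (n+1)).filter fun j => j % p = i % p)
      = #((range n).filter fun j => j % p = i % p) + (if n % p = i % p then 1 else 0) := by
    intro i
    rw [Finset.range_add_one, Finset.filter_insert]
    split_ifs with h
    · rw [Finset.card_insert_of_notMem (by simp)]
    · rfl
  simp_rw [hfil]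
  rw [Finset.sum_add_distrib]
  have h1 : (∑ i ∈ range n, if n % p = i % p then 1 else 0)
      = #((range n).filter fun i => i % p = n % p) := by
    rw [Finset.card_filter]
    exact Finset.sum_congr rfl fun i _ => by simp [eq_comm]
  rw [h1, lemN p n hp]
  simp [lemN p n hp]
  ring

lemma lemRec (p n : ℕ) (hp : 0 < p) :
    turanEdges p (n+1) = turanEdges p n + (n - n / p) := by
  have h1 := lemA p n
  have h2 := lemA p (n+1)
  rw [lemS p n hp] at h2
  have h3 : n / p ≤ n := Nat.div_le_self n p
  have h4 : (n+1) * (n+1) = n * n + 2 * n + 1 := by ring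
  omega

lemma lemSum (p m k : ℕ) (hp : 0 < p) :
    turanEdges p (m + k) = turanEdges p m + ∑ j ∈ range k, ((m + j) - (m + j) / p) := by
  induction k with
  | zero => simp
  | succ k ih =>
    rw [← add_assoc, lemRec p (m+k) hp, ih, Finset.sum_range_succ, add_assoc]


/-- For all integers `n > k ≥ 1` and `p ≥ 1`,
`t_p(n) − t_p(n−k) ≥ (1 − 1/p)·k·(n−k)`. -/
theorem stmt_9 (n k p : ℕ) (hk : 1 ≤ k) (hkn : k < n) (hp : 1 ≤ p) :
    (1 - 1 / (p : ℝ)) * k * ((n : ℝ) - k) ≤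
      (turanEdges p n : ℝ) - turanEdges p (n - k) := by
  have hp0 : (0:ℝ) < p := by exact_mod_cast hp
  have hp1 : 1 / (p:ℝ) ≤ 1 := by
    rw [div_le_one hp0]; exact_mod_cast hp
  have hnonneg : (0:ℝ) ≤ 1 - 1/(p:ℝ) := by linarith
  set m := n - k with hm
  have hn : n = m + k := by omega
  have hE := lemSum p m k (by omega)
  rw [hn, hE]
  have hterm : ∀ j ∈ range k,
      (1 - 1/(p:ℝ)) * m ≤ ((((m+j) - (m+j)/p : ℕ) : ℝ)) := by
    intro j hj
    have hle : (m+j)/p ≤ m+j := Nat.div_le_self _ _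
    rw [Nat.cast_sub hle]
    have h1 : (((m+j)/p : ℕ) : ℝ) ≤ ((m+j : ℕ) : ℝ)/p := Nat.cast_div_le
    have h2 : (m:ℝ) ≤ ((m+j : ℕ) : ℝ) := by push_cast; linarith [Nat.cast_nonneg (α := ℝ) j]
    have h3 : (1 - 1/(p:ℝ)) * m ≤ (1 - 1/(p:ℝ)) * ((m+j:ℕ) : ℝ) := by
      exact mul_le_mul_of_nonneg_left h2 hnonneg
    have h4 : (1 - 1/(p:ℝ)) * ((m+j:ℕ) : ℝ) = ((m+j:ℕ):ℝ) - ((m+j:ℕ):ℝ)/p := by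
      ring
    linarith
  have key : (k:ℝ) * ((1 - 1/(p:ℝ)) * m) ≤
      ∑ j ∈ range k, ((((m+j) - (m+j)/p : ℕ) : ℝ)) := by
    calc (k:ℝ) * ((1 - 1/(p:ℝ)) * m)
        = ∑ _j ∈ range k, (1 - 1/(p:ℝ)) * m := by
          rw [Finset.sum_const, Finset.card_range, nsmul_eq_mul]
      _ ≤ _ := Finset.sum_le_sum hterm
  push_cast
  push_cast at key
  nlinarith [key]
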